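/- For any left module M over an associative unital ring R, the inclusions N_s(M) ⊆ ⟨E_M(0)⟩ ⊆ β_co(M) hold. -/

import Mathlib

universe u v w

/-- The envelope of zero in a ring `R`:
`E_R(0) = {r·s : r, s ∈ R, r^k·s = 0 for some positive integer k}`. -/
def ringEnvelopeZero (R : Type u) [Ring R] : Set R :=
  {x | ∃ (r s : R) (k : ℕ), 0 < k ∧ r ^ k * s = 0 ∧ x = r * s}

/-- A two-sided ideal `P` of `R` is prime if it is proper and
`A·B ⊆ P` implies `A ⊆ P` or `B ⊆ P` for all two-sided ideals `A`, `B`. -/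
def IsPrimeTwoSidedIdeal {R : Type u} [Ring R] (P : TwoSidedIdeal R) : Prop :=
  P ≠ ⊤ ∧ ∀ A B : TwoSidedIdeal R, (∀ a ∈ A, ∀ b ∈ B, a * b ∈ P) → A ≤ P ∨ B ≤ P

/-- A two-sided ideal `P` of `R` is completely prime if it is proper and
`a·b ∈ P` implies `a ∈ P` or `b ∈ P`. -/
def IsCompletelyPrimeTwoSidedIdeal {R : Type u} [Ring R] (P : TwoSidedIdeal R) : Prop :=
  P ≠ ⊤ ∧ ∀ a b : R, a * b ∈ P → a ∈ P ∨ b ∈ P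

/-- `β(R)`: the prime radical of `R`, the intersection of all prime two-sided ideals. -/
def ringPrimeRadical (R : Type u) [Ring R] : Set R :=
  {x | ∀ P : TwoSidedIdeal R, IsPrimeTwoSidedIdeal P → x ∈ P}

/-- `β_co(R)`: the completely prime radical of `R`. -/
def ringCompletelyPrimeRadical (R : Type u) [Ring R] : Set R :=
  {x | ∀ P : TwoSidedIdeal R, IsCompletelyPrimeTwoSidedIdeal P → x ∈ P}

/-- A ring is 2-primal if its set of nilpotent elements equals its prime radical. -/
def IsTwoPrimalRing (R : Type u) [Ring R] : Prop :=
  {x : R | IsNilpotent x} = ringPrimeRadical R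

section ModuleDefs

variable {R : Type u} [Ring R] {M : Type v} [AddCommGroup M] [Module R M]

/-- The envelope `E_M(N) = {r·m : r ∈ R, m ∈ M, r^k·m ∈ N for some positive integer k}`. -/
def envelope (N : Submodule R M) : Set M :=
  {x | ∃ (r : R) (m : M) (k : ℕ), 0 < k ∧ r ^ k • m ∈ N ∧ x = r • m}

/-- `P` is a prime submodule of `M`: `P ≠ M` and for every two-sided ideal `A` of `R` and
every submodule `N` of `M`, `A·N ⊆ P` implies `N ⊆ P` or `A·M ⊆ P`. -/
def IsPrimeSubmodule (P : Submodule R M) : Prop :=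
  P ≠ ⊤ ∧ ∀ (A : TwoSidedIdeal R) (N : Submodule R M),
    (∀ a ∈ A, ∀ n ∈ N, a • n ∈ P) → N ≤ P ∨ ∀ a ∈ A, ∀ m : M, a • m ∈ P

/-- `P` is a completely prime submodule of `M`: `P ≠ M` and `r·m ∈ P` implies
`m ∈ P` or `r·M ⊆ P`. -/
def IsCompletelyPrimeSubmodule (P : Submodule R M) : Prop :=
  P ≠ ⊤ ∧ ∀ (r : R) (m : M), r • m ∈ P → m ∈ P ∨ ∀ m' : M, r • m' ∈ P

/-- `P` is a completely semiprime submodule of `M`: `P ≠ M` and `a²·m ∈ P` implies `a·m ∈ P`. -/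
def IsCompletelySemiprimeSubmodule (P : Submodule R M) : Prop :=
  P ≠ ⊤ ∧ ∀ (a : R) (m : M), (a * a) • m ∈ P → a • m ∈ P

/-- `β^s(N)`: the intersection of all prime submodules of `M` containing `N`
(`= M` if there are none). -/
def primeRadicalOf (N : Submodule R M) : Submodule R M :=
  sInf {P : Submodule R M | IsPrimeSubmodule P ∧ N ≤ P}

/-- `β_co^s(N)`: the intersection of all completely prime submodules of `M` containing `N`
(`= M` if there are none). -/
def cPrimeRadicalOf (N : Submodule R M) : Submodule R M :=
  sInf {P : Submodule R M | IsCompletelyPrimeSubmodule P ∧ N ≤ P}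

/-- An element `m` of `M` is strongly nilpotent if `m = a_1·m_1 + … + a_r·m_r` such that for
every `i` and every sequence `a_{i,1}, a_{i,2}, …` with `a_{i,1} = a_i` and
`a_{i,n+1} ∈ a_{i,n}·R·a_{i,n}`, there exists `k` with `a_{i,k}·R·m_i = 0`. -/
def IsStronglyNilpotent (R : Type u) [Ring R] {M : Type v} [AddCommGroup M] [Module R M]
    (m : M) : Prop :=
  ∃ (r : ℕ) (a : Fin r → R) (mi : Fin r → M),
    m = ∑ i, a i • mi i ∧
    ∀ (i : Fin r) (s : ℕ → R), s 0 = a i → (∀ n, ∃ t : R, s (n + 1) = s n * t * s n) →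
      ∃ k, ∀ t : R, (s k * t) • mi i = 0

/-- `N_s(M)`: the set of strongly nilpotent elements of `M`. -/
def stronglyNilpotentSet (R : Type u) [Ring R] (M : Type v) [AddCommGroup M] [Module R M] :
    Set M :=
  {m : M | IsStronglyNilpotent R m}

end ModuleDefs

/-- for any module `M`, `N_s(M) ⊆ ⟨E_M(0)⟩ ⊆ β_co(M)`. -/
theorem stmt5 {R : Type u} [Ring R] {M : Type v} [AddCommGroup M] [Module R M] :
    stronglyNilpotentSet R M ⊆
      (Submodule.span R (envelope (⊥ : Submodule R M)) : Set M) ∧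
    Submodule.span R (envelope (⊥ : Submodule R M)) ≤
      cPrimeRadicalOf (⊥ : Submodule R M) := by
  constructor
  · rintro m ⟨r, a, mi, hm, hstrong⟩
    rw [hm]
    apply Submodule.sum_mem
    intro i _
    apply Submodule.subset_span
    obtain ⟨k, hk⟩ := hstrong i (fun n => a i ^ (2 ^ n)) (by simp)
      (fun n => ⟨1, by show a i ^ 2 ^ (n+1) = _; rw [mul_one, ← pow_add, pow_succ 2 n, mul_two]⟩)
    refine ⟨a i, mi i, 2 ^ k, Nat.pow_pos (by norm_num : 0 < 2), ?_, rfl⟩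
    have := hk 1
    rw [mul_one] at this
    simpa using this
  · rw [Submodule.span_le]
    rintro x ⟨r, m, k, hk, h0, rfl⟩
    rw [Submodule.mem_bot] at h0
    apply Submodule.mem_sInf.mpr
    rintro P ⟨⟨-, hP⟩, -⟩
    obtain ⟨k', rfl⟩ := Nat.exists_eq_add_of_lt hk
    rw [zero_add] at h0
    have h0' : r ^ (k' + 1) • m ∈ P := by rw [h0]; exact P.zero_mem
    clear hk h0
    induction k' generalizing m with
    | zero => rwa [pow_one] at h0'
    | succ n ih =>
      have h1 : r • (r ^ (n + 1) • m) ∈ P := by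
        rwa [← mul_smul, ← pow_succ']
      rcases hP r (r ^ (n + 1) • m) h1 with h2 | h2
      · exact ih m h2
      · exact h2 m
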